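/- Let (X,τ) be a Hausdorff topological space, m a finite Radon measure on X, and A a unital subalgebra of the bounded continuous real-valued functions on X which separates the points of X. Let p ∈ [1,∞) and let I ⊆ ℝ be a closed (possibly unbounded) interval. Then for every Borel function f : X → ℝ with f(x) ∈ I for all x ∈ X and ∫_X |f|^p dm < ∞, there exists a sequence (f_n) in A with f_n(x) ∈ I for all x ∈ X and ∫_X |f − f_n|^p dm → 0 as n → ∞. -/

import Mathlib

open Filter Set Topology MeasureTheory
open scoped ENNReal

lemma myConst_mem {X : Type*} (A : Subalgebra ℝ (X → ℝ)) (c : ℝ) :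
    (fun _ : X => c) ∈ A :=
  A.algebraMap_mem c

lemma myPoly_mem {X : Type*} (A : Subalgebra ℝ (X → ℝ)) {g : X → ℝ} (hg : g ∈ A)
    (q : Polynomial ℝ) : (fun x => q.eval (g x)) ∈ A := by
  induction q using Polynomial.induction_on' with
  | add q1 q2 h1 h2 =>
    have := A.add_mem h1 h2
    simpa [Polynomial.eval_add, Pi.add_def] using this
  | monomial n a =>
    have h1 : (fun x => a * g x ^ n) ∈ A := by
      have h2 := A.smul_mem (A.pow_mem hg n) a
      have : (a • g ^ n) = fun x => a * g x ^ n := by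
        funext x; simp [Pi.smul_apply, Pi.pow_apply]
      rwa [this] at h2
    simpa [Polynomial.eval_monomial] using h1

set_option maxHeartbeats 1000000 in
lemma myProj_approx {X : Type*} (A : Subalgebra ℝ (X → ℝ))
    {I : Set ℝ} (hIc : IsClosed I) (hIconv : Convex ℝ I)
    {t₀ : ℝ} (ht₀ : t₀ ∈ I)
    {g : X → ℝ} (hgA : g ∈ A) {M : ℝ} (hM0 : 0 ≤ M) (hM : ∀ x, |g x| ≤ M)
    {η : ℝ} (hη : 0 < η) :
    ∃ G ∈ A, (∀ x, G x ∈ I) ∧ ∀ x, ∀ s ∈ I, |s - G x| ≤ |s - g x| + η := by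
  classical
  set c1 : ℝ := min t₀ (-M) with hc1
  set c2 : ℝ := max t₀ M with hc2
  set J : Set ℝ := I ∩ Icc c1 c2 with hJ
  have ht₀J : t₀ ∈ J := ⟨ht₀, min_le_left _ _, le_max_left _ _⟩
  have hJcomp : IsCompact J :=
    isCompact_Icc.of_isClosed_subset (hIc.inter isClosed_Icc) inter_subset_right
  have hJne : J.Nonempty := ⟨t₀, ht₀J⟩
  set a : ℝ := sInf J with ha
  set b : ℝ := sSup J with hb
  have haJ : a ∈ J := hJcomp.sInf_mem hJne
  have hbJ : b ∈ J := hJcomp.sSup_mem hJne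
  have hab : a ≤ b := csInf_le_csSup hJne hJcomp.bddBelow hJcomp.bddAbove
  have haI : a ∈ I := haJ.1
  have hbI : b ∈ I := hbJ.1
  have hOC : I.OrdConnected := hIconv.ordConnected
  have hsub : Icc a b ⊆ I := hOC.out haI hbI
  have ht₀b : t₀ ≤ b := le_csSup hJcomp.bddAbove ht₀J
  have hat₀ : a ≤ t₀ := csInf_le hJcomp.bddBelow ht₀J
  set π : ℝ → ℝ := fun t => max a (min t b) with hπ
  have hπab : ∀ t, π t ∈ Icc a b := by
    intro t
    exact ⟨le_max_left _ _, max_le hab (min_le_right t b)⟩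
  have hπI : ∀ t, π t ∈ I := fun t => hsub (hπab t)
  -- key pointwise inequality
  have hπle : ∀ t, |t| ≤ M → ∀ s ∈ I, |s - π t| ≤ |s - t| := by
    intro t ht s hs
    rcases abs_le.1 ht with ⟨htl, htr⟩
    by_cases h1 : t ≤ b
    · by_cases h2 : a ≤ t
      · have : π t = t := by
          simp only [hπ]
          rw [min_eq_left h1, max_eq_right h2]
        rw [this]
      · push_neg at h2
        have hπt : π t = a := by
          simp only [hπ]
          rw [min_eq_left h1, max_eq_left h2.le]
        have has : a ≤ s := by
          by_contra hcon
          push_neg at hcon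
          set u : ℝ := max s c1 with hu
          have hua : u < a :=
            max_lt hcon ((min_le_right t₀ (-M)).trans_lt (lt_of_le_of_lt htl h2))
          have huI : u ∈ I := by
            refine hOC.out hs ht₀ ⟨le_max_left _ _, ?_⟩
            exact max_le (lt_of_lt_of_le hcon hat₀).le (min_le_left _ _)
          have huJ : u ∈ J := ⟨huI, le_max_right _ _, hua.le.trans haJ.2.2⟩
          exact absurd (csInf_le hJcomp.bddBelow huJ) (not_le.2 hua)
        rw [hπt, abs_of_nonneg (by linarith), abs_of_nonneg (by linarith)]
        linarith
    · push_neg at h1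
      have hπt : π t = b := by
        simp only [hπ]
        rw [min_eq_right h1.le, max_eq_right hab]
      have hsb : s ≤ b := by
        by_contra hcon
        push_neg at hcon
        set u : ℝ := min s c2 with hu
        have hbu : b < u := lt_min hcon (h1.trans_le (htr.trans (le_max_right t₀ M)))
        have huI : u ∈ I :=
          hOC.out ht₀ hs ⟨ht₀b.trans hbu.le, min_le_left _ _⟩
        have huJ : u ∈ J :=
          ⟨huI, (min_le_left t₀ (-M)).trans (ht₀b.trans hbu.le), min_le_right _ _⟩
        exact absurd (le_csSup hJcomp.bddAbove huJ) (not_le.2 hbu)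
      rw [hπt, abs_of_nonpos (by linarith), abs_of_nonpos (by linarith)]
      linarith
  by_cases hone : b ≤ a
  · -- J is a single point; use the constant function a
    have hba : a = b := le_antisymm hab hone
    refine ⟨fun _ => a, myConst_mem A a, fun _ => haI, ?_⟩
    intro x s hs
    have hπa : π (g x) = a := by
      simp only [hπ]
      have : min (g x) b ≤ a := by rw [← hba]; exact min_le_right _ _
      rw [max_eq_left this]
    have := hπle (g x) (hM x) s hs
    rw [hπa] at this
    linarith
  · push_neg at hone
    set c : ℝ := (a + b) / 2 with hc
    set r : ℝ := (b - a) / 2 with hr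
    have hr0 : 0 < r := by simp only [hr]; linarith
    have hball : ∀ y : ℝ, |y - c| < r → y ∈ I := by
      intro y hy
      rcases abs_lt.1 hy with ⟨hy1, hy2⟩
      refine hsub ⟨?_, ?_⟩ <;> simp only [hc, hr] at hy1 hy2 ⊢ <;> linarith
    set D : ℝ := |c| + |a| + |b| with hD
    have hD0 : 0 ≤ D := by positivity
    set l : ℝ := min (1/2 : ℝ) (η / (2*D+1)) with hl
    have hl0 : 0 < l := lt_min (by norm_num) (div_pos hη (by linarith))
    have hl2 : l ≤ 1/2 := min_le_left _ _
    have hlD : l * D ≤ η / 2 := by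
      have h1 : l ≤ η / (2*D+1) := min_le_right _ _
      have h2 : l * D ≤ (η / (2*D+1)) * D := mul_le_mul_of_nonneg_right h1 hD0
      refine h2.trans ?_
      rw [div_mul_eq_mul_div, div_le_div_iff₀ (by linarith) (by norm_num)]
      nlinarith
    set η' : ℝ := min (η/2) (l*r/2) with hη'
    have hη'0 : 0 < η' := lt_min (by linarith) (by positivity)
    have hπcont : ContinuousOn π (Icc (-M) M) :=
      (continuous_const.max (continuous_id.min continuous_const)).continuousOn
    obtain ⟨q, hq⟩ := exists_polynomial_near_of_continuousOn (-M) M π hπcont η' hη'0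
    refine ⟨fun x => (1 - l) * q.eval (g x) + l * c, ?_, ?_, ?_⟩
    · have h1 : ((1-l) • (fun x => q.eval (g x)) + fun _ : X => l * c) ∈ A :=
        A.add_mem (A.smul_mem (myPoly_mem A hgA q) _) (myConst_mem A (l*c))
      have h2 : ((1-l) • (fun x => q.eval (g x)) + fun _ : X => l * c)
          = fun x => (1 - l) * q.eval (g x) + l * c := by
        funext x; simp [Pi.smul_apply]
      rwa [h2] at h1
    · intro x
      have hgx : g x ∈ Icc (-M) M := abs_le.1 (hM x)
      have hqx : |q.eval (g x) - π (g x)| < η' := hq _ hgx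
      set y : ℝ := π (g x) with hy
      set z : ℝ := q.eval (g x) with hz
      set w : ℝ := c + (1-l) * (z - y) / l with hw
      have hwc : |w - c| < r := by
        have hwc1 : w - c = (1-l) * (z - y) / l := by rw [hw]; ring
        rw [hwc1, abs_div, abs_mul, abs_of_pos hl0, abs_of_nonneg (by linarith : (0:ℝ) ≤ 1 - l)]
        rw [div_lt_iff₀ hl0]
        have hzy : |z - y| < l * r / 2 := lt_of_lt_of_le hqx (min_le_right _ _)
        nlinarith [abs_nonneg (z - y)]
      have hwI : w ∈ I := hball w hwc
      have hyI : y ∈ I := hπI (g x)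
      have hGx : (1 - l) * z + l * c = (1-l) * y + l * w := by
        rw [hw]; field_simp; ring
      show (1 - l) * z + l * c ∈ I
      rw [hGx]
      have := hIconv hyI hwI (by linarith : (0:ℝ) ≤ 1 - l) hl0.le (by ring)
      simpa [smul_eq_mul] using this
    · intro x s hs
      have hgx : g x ∈ Icc (-M) M := abs_le.1 (hM x)
      have hqx : |q.eval (g x) - π (g x)| < η' := hq _ hgx
      set y : ℝ := π (g x) with hy
      set z : ℝ := q.eval (g x) with hz
      have hyD : |y - c| ≤ D := by
        rcases hπab (g x) with ⟨hy1, hy2⟩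
        rw [← hy] at hy1 hy2
        have h1 : |y| ≤ |a| + |b| := by
          rw [abs_le]
          constructor
          · have := neg_abs_le a
            have := abs_nonneg b
            linarith
          · have := le_abs_self b
            have := abs_nonneg a
            linarith
        calc |y - c| ≤ |y| + |c| := abs_sub _ _
          _ ≤ D := by rw [hD]; linarith
      have key : |y - ((1-l) * z + l * c)| ≤ η := by
        have h1 : y - ((1-l) * z + l * c) = (1-l) * (y - z) + l * (y - c) := by ring
        rw [h1]
        calc |(1-l) * (y - z) + l * (y - c)|
            ≤ |(1-l) * (y - z)| + |l * (y - c)| := abs_add_le _ _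
          _ = (1-l) * |y - z| + l * |y - c| := by
              rw [abs_mul, abs_mul, abs_of_nonneg (by linarith : (0:ℝ) ≤ 1 - l),
                abs_of_pos hl0]
          _ ≤ η := by
              have h2 : |y - z| < η' := by rw [abs_sub_comm]; exact hqx
              have h3 : η' ≤ η / 2 := min_le_left _ _
              have h4 : l * |y - c| ≤ l * D := mul_le_mul_of_nonneg_left hyD hl0.le
              nlinarith [abs_nonneg (y - z)]
      have h5 : |s - y| ≤ |s - g x| := hπle (g x) (hM x) s hs
      calc |s - ((1-l) * z + l * c)|
          ≤ |s - y| + |y - ((1-l) * z + l * c)| := by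
            have : s - ((1-l) * z + l * c) = (s - y) + (y - ((1-l) * z + l * c)) := by ring
            rw [this]; exact abs_add_le _ _
        _ ≤ |s - g x| + η := add_le_add h5 key

lemma mySmall_const {α : Type*} [MeasurableSpace α] (m : Measure α) [IsFiniteMeasure m]
    (P : ℝ≥0∞) {ε : ℝ≥0∞} (hε : ε ≠ 0) :
    ∃ η : ℝ, 0 < η ∧ ∀ v : α → ℝ, (∀ x, ‖v x‖ ≤ η) → eLpNorm v P m ≤ ε := by
  set c : ℝ≥0∞ := m Set.univ ^ P.toReal⁻¹ with hc
  have hct : c ≠ ⊤ :=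
    (ENNReal.rpow_lt_top_of_nonneg (inv_nonneg.2 ENNReal.toReal_nonneg)
      (measure_ne_top m _)).ne
  set δ : ℝ≥0∞ := min (ε / (c + 1)) 1 with hδ
  have hδ0 : δ ≠ 0 := by
    have h1 : ε / (c + 1) ≠ 0 := by
      simp only [ne_eq, ENNReal.div_eq_zero_iff, not_or]
      exact ⟨hε, by simp [hct]⟩
    simp only [hδ, ne_eq, min_eq_iff, not_or, not_and_or]
    exact ⟨Or.inl h1, Or.inl (by norm_num)⟩
  have hδt : δ ≠ ⊤ := by
    simp only [hδ, ne_eq]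
    exact (min_le_right _ _).trans_lt (by norm_num) |>.ne
  refine ⟨δ.toReal, ENNReal.toReal_pos hδ0 hδt, ?_⟩
  intro v hv
  have h1 : eLpNorm v P m ≤ c * ENNReal.ofReal δ.toReal :=
    (eLpNorm_le_of_ae_bound (ae_of_all m hv)).trans_eq (by rw [hc])
  rw [ENNReal.ofReal_toReal hδt] at h1
  refine h1.trans ?_
  calc c * δ ≤ (c + 1) * (ε / (c + 1)) := by
        exact mul_le_mul' le_self_add (min_le_left _ _)
    _ ≤ ε := ENNReal.mul_div_le

lemma mySmall_indicator {α : Type*} [MeasurableSpace α] (m : Measure α)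
    (P : ℝ≥0∞) (hP0 : P ≠ 0) (hPt : P ≠ ⊤) {ε : ℝ≥0∞} (hε : ε ≠ 0) :
    ∃ δ : ℝ≥0∞, δ ≠ 0 ∧ ∀ W : Set α, MeasurableSet W → m W ≤ 2 * δ →
      eLpNorm (W.indicator fun _ => (1:ℝ)) P m ≤ ε := by
  have hp0 : 0 < P.toReal := ENNReal.toReal_pos hP0 hPt
  set ε' : ℝ≥0∞ := min ε 1 with hε'
  have hε'0 : ε' ≠ 0 := by
    simp only [hε', ne_eq, min_eq_iff]
    intro h
    rcases h with ⟨h, -⟩ | ⟨h, -⟩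
    · exact hε h
    · norm_num at h
  refine ⟨ε' ^ P.toReal / 2, ?_, ?_⟩
  · rw [ne_eq, ENNReal.div_eq_zero_iff]
    push_neg
    constructor
    · simp only [ne_eq, ENNReal.rpow_eq_zero_iff, not_or, not_and_or]
      exact ⟨Or.inl hε'0, Or.inr (by linarith)⟩
    · norm_num
  · intro W hW hmW
    have h2 : (2:ℝ≥0∞) * (ε' ^ P.toReal / 2) = ε' ^ P.toReal := by
      rw [mul_comm, ENNReal.div_mul_cancel (by norm_num) (by norm_num)]
    rw [h2] at hmW
    rw [eLpNorm_indicator_const hW hP0 hPt]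
    have h3 : m W ^ (1 / P.toReal) ≤ (ε' ^ P.toReal) ^ (1 / P.toReal) :=
      ENNReal.rpow_le_rpow hmW (by positivity)
    rw [one_div, ENNReal.rpow_rpow_inv hp0.ne'] at h3
    rw [one_div]
    calc (‖(1:ℝ)‖₊ : ℝ≥0∞) * m W ^ P.toReal⁻¹ = m W ^ P.toReal⁻¹ := by simp
      _ ≤ ε' := h3
      _ ≤ ε := min_le_left _ _

set_option maxHeartbeats 1000000 in
lemma myIndicator_approx {X : Type*} [TopologicalSpace X] [T2Space X] [MeasurableSpace X]
    [BorelSpace X]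
    (m : Measure X) [IsFiniteMeasure m] [m.InnerRegular]
    (A : Subalgebra ℝ (X → ℝ))
    (hAc : ∀ f ∈ A, Continuous f)
    (hAb : ∀ f ∈ A, ∃ C : ℝ, ∀ x, |f x| ≤ C)
    (hAsep : ∀ x y : X, x ≠ y → ∃ f ∈ A, f x ≠ f y)
    (P : ℝ≥0∞) (hP1 : 1 ≤ P) (hPt : P ≠ ⊤)
    {S : Set X} (hS : MeasurableSet S) {ε : ℝ≥0∞} (hε : ε ≠ 0) :
    ∃ g ∈ A, (∀ x, g x ∈ Icc (0:ℝ) 1) ∧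
      eLpNorm (fun x => S.indicator (fun _ => (1:ℝ)) x - g x) P m ≤ ε := by
  classical
  have hP0 : P ≠ 0 := by
    intro h; rw [h] at hP1; exact absurd hP1 (by norm_num)
  have hε2 : ε / 2 ≠ 0 := by
    simp only [ne_eq, ENNReal.div_eq_zero_iff, not_or]; exact ⟨hε, by norm_num⟩
  obtain ⟨η, hη, hconst⟩ := mySmall_const m P hε2
  obtain ⟨δ, hδ, hind⟩ := mySmall_indicator m P hP0 hPt hε2
  obtain ⟨K, hKS, hK, hmK⟩ := hS.exists_isCompact_lt_add (measure_ne_top m S) hδ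
  obtain ⟨K', hK'S, hK', hmK'⟩ := hS.compl.exists_isCompact_lt_add (measure_ne_top m Sᶜ) hδ
  have hd : Disjoint K K' := by
    rw [Set.disjoint_left]
    intro x hxK hxK'
    exact hK'S hxK' (hKS hxK)
  set Y : Set X := K ∪ K' with hY
  have hYc : IsCompact Y := hK.union hK'
  haveI : CompactSpace ↥Y := isCompact_iff_compactSpace.mp hYc
  -- Urysohn function on Y
  have hcl1 : IsClosed {y : ↥Y | (y : X) ∈ K'} :=
    hK'.isClosed.preimage continuous_subtype_val
  have hcl2 : IsClosed {y : ↥Y | (y : X) ∈ K} :=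
    hK.isClosed.preimage continuous_subtype_val
  have hdis : Disjoint {y : ↥Y | (y : X) ∈ K'} {y : ↥Y | (y : X) ∈ K} := by
    rw [Set.disjoint_left]
    intro y hy1 hy2
    exact (Set.disjoint_left.1 hd) hy2 hy1
  obtain ⟨h, hh0, hh1, hh01⟩ := exists_continuous_zero_one_of_isClosed hcl1 hcl2 hdis
  -- the subalgebra of C(Y, ℝ) induced by A
  set A' : Subalgebra ℝ C(X, ℝ) := A.comap (ContinuousMap.coeFnAlgHom ℝ) with hA'
  set ρ : C(X, ℝ) →ₐ[ℝ] C(↥Y, ℝ) :=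
    ContinuousMap.compRightAlgHom ℝ ℝ ⟨Subtype.val, continuous_subtype_val⟩ with hρ
  set B : Subalgebra ℝ C(↥Y, ℝ) := A'.map ρ with hB
  have hsep : B.SeparatesPoints := by
    intro y y' hyy'
    obtain ⟨f₀, hf₀A, hf₀⟩ := hAsep y y' (fun hc => hyy' (Subtype.coe_injective hc))
    have hmem : (⟨f₀, hAc f₀ hf₀A⟩ : C(X, ℝ)) ∈ A' := by
      simp only [hA', Subalgebra.mem_comap]
      exact hf₀A
    exact ⟨_, ⟨ρ ⟨f₀, hAc f₀ hf₀A⟩, ⟨⟨f₀, hAc f₀ hf₀A⟩, hmem, rfl⟩, rfl⟩, hf₀⟩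
  obtain ⟨gB, hgB⟩ :=
    ContinuousMap.exists_mem_subalgebra_near_continuousMap_of_separatesPoints B hsep h
      (η/2) (by linarith)
  obtain ⟨gc, hgcA', hgc⟩ := Subalgebra.mem_map.1 gB.2
  rw [Subalgebra.mem_comap] at hgcA'
  set g : X → ℝ := ⇑gc with hg
  have hgA : g ∈ A := hgcA'
  have hclose : ∀ y : ↥Y, |g (y : X) - h y| < η/2 := by
    intro y
    have h1 : ‖((gB : C(↥Y, ℝ)) - h) y‖ ≤ ‖(gB : C(↥Y, ℝ)) - h‖ :=
      ContinuousMap.norm_coe_le_norm _ y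
    have h2 : ((gB : C(↥Y, ℝ)) - h) y = g (y : X) - h y := by
      rw [← hgc]
      simp [hρ, hg]
    rw [h2] at h1
    exact lt_of_le_of_lt h1 hgB
  -- bound on g and projection into [0,1]
  obtain ⟨C, hC⟩ := hAb g hgA
  have hM : ∀ x, |g x| ≤ max C 0 := fun x => (hC x).trans (le_max_left _ _)
  obtain ⟨G, hGA, hGI, hGest⟩ := myProj_approx A isClosed_Icc (convex_Icc (0:ℝ) 1)
    (show (0:ℝ) ∈ Icc (0:ℝ) 1 by norm_num) hgA (le_max_right C 0) hM
    (show (0:ℝ) < η/2 by linarith)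
  refine ⟨G, hGA, hGI, ?_⟩
  set ind : X → ℝ := S.indicator (fun _ => (1:ℝ)) with hindd
  have hind01 : ∀ x, ind x ∈ Icc (0:ℝ) 1 := by
    intro x
    by_cases hx : x ∈ S <;> simp [hindd, Set.indicator_apply, hx]
  set W : Set X := Yᶜ with hW
  have hWm : MeasurableSet W := (hYc.isClosed.measurableSet).compl
  -- pointwise bound
  have hpt : ∀ x, ‖ind x - G x‖ ≤ η + W.indicator (fun _ => (1:ℝ)) x := by
    intro x
    have hbase : |ind x - G x| ≤ |ind x - g x| + η/2 := hGest x (ind x) (hind01 x)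
    by_cases hxY : x ∈ Y
    · have hindg : |ind x - g x| ≤ η/2 := by
        rcases hxY with hxK | hxK'
        · have h1 : h ⟨x, Or.inl hxK⟩ = 1 := by
            simpa using hh1 (show ((⟨x, Or.inl hxK⟩ : ↥Y) : X) ∈ K from hxK)
          have h2 := hclose ⟨x, Or.inl hxK⟩
          rw [h1] at h2
          have hindx : ind x = 1 := by simp [hindd, Set.indicator_apply, hKS hxK]
          rw [hindx, abs_sub_comm]
          exact h2.le
        · have h1 : h ⟨x, Or.inr hxK'⟩ = 0 := by
            simpa using hh0 (show ((⟨x, Or.inr hxK'⟩ : ↥Y) : X) ∈ K' from hxK')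
          have h2 := hclose ⟨x, Or.inr hxK'⟩
          rw [h1] at h2
          have hindx : ind x = 0 := Set.indicator_of_notMem (hK'S hxK') _
          rw [hindx, abs_sub_comm]
          simpa using h2.le
      rw [Real.norm_eq_abs]
      have : W.indicator (fun _ => (1:ℝ)) x = 0 := by
        simp [hW, Set.indicator_apply, hxY]
      rw [this]
      linarith
    · have h1 : |ind x - G x| ≤ 1 := by
        rcases hind01 x with ⟨hi0, hi1⟩
        rcases hGI x with ⟨hg0, hg1⟩
        rw [abs_le]; constructor <;> linarith
      have : W.indicator (fun _ => (1:ℝ)) x = 1 := by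
        simp [hW, Set.indicator_apply, hxY]
      rw [Real.norm_eq_abs, this]
      linarith
  -- assemble the eLpNorm bound
  have hWsmall : m W ≤ 2 * δ := by
    have h1 : W ⊆ (S \ K) ∪ (Sᶜ \ K') := by
      intro x hx
      simp only [hW, hY, Set.mem_compl_iff, Set.mem_union, not_or] at hx
      by_cases hxS : x ∈ S
      · exact Or.inl ⟨hxS, hx.1⟩
      · exact Or.inr ⟨hxS, hx.2⟩
    have h2 : m (S \ K) ≤ δ :=
      (measure_diff_lt_of_lt_add hK.isClosed.measurableSet.nullMeasurableSet hKS
        (measure_ne_top m K) hmK).le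
    have h3 : m (Sᶜ \ K') ≤ δ :=
      (measure_diff_lt_of_lt_add hK'.isClosed.measurableSet.nullMeasurableSet hK'S
        (measure_ne_top m K') hmK').le
    calc m W ≤ m ((S \ K) ∪ (Sᶜ \ K')) := measure_mono h1
      _ ≤ m (S \ K) + m (Sᶜ \ K') := measure_union_le _ _
      _ ≤ δ + δ := add_le_add h2 h3
      _ = 2 * δ := (two_mul δ).symm
  have hη' : eLpNorm (fun _ : X => η) P m ≤ ε/2 :=
    hconst _ (fun x => by simp [Real.norm_eq_abs, abs_of_pos hη])
  have hWind := hind W hWm hWsmall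
  have h4 : eLpNorm (fun x => ind x - G x) P m ≤
      eLpNorm ((fun _ : X => η) + W.indicator (fun _ => (1:ℝ))) P m :=
    eLpNorm_mono_real (fun x => by simpa using hpt x)
  refine h4.trans ?_
  have h5 := eLpNorm_add_le (aestronglyMeasurable_const (μ := m) (b := η))
    ((measurable_const.indicator hWm).aestronglyMeasurable
      (μ := m) : AEStronglyMeasurable (W.indicator fun _ => (1:ℝ)) m) hP1
  refine h5.trans ?_
  calc eLpNorm (fun _ : X => η) P m + eLpNorm (W.indicator fun _ => (1:ℝ)) P m
      ≤ ε/2 + ε/2 := add_le_add hη' hWind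
    _ = ε := ENNReal.add_halves ε

set_option maxHeartbeats 1000000 in
lemma mySimpleFunc_approx {X : Type*} [TopologicalSpace X] [T2Space X] [MeasurableSpace X]
    [BorelSpace X]
    (m : Measure X) [IsFiniteMeasure m] [m.InnerRegular]
    (A : Subalgebra ℝ (X → ℝ))
    (hAc : ∀ f ∈ A, Continuous f)
    (hAb : ∀ f ∈ A, ∃ C : ℝ, ∀ x, |f x| ≤ C)
    (hAsep : ∀ x y : X, x ≠ y → ∃ f ∈ A, f x ≠ f y)
    (P : ℝ≥0∞) (hP1 : 1 ≤ P) (hPt : P ≠ ⊤)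
    (s : SimpleFunc X ℝ) :
    ∀ ε : ℝ≥0∞, ε ≠ 0 → ∃ g ∈ A, eLpNorm (fun x => s x - g x) P m ≤ ε := by
  induction s using SimpleFunc.induction with
  | const c hS =>
    rename_i S
    intro ε hε
    by_cases hc : c = 0
    · refine ⟨fun _ => 0, myConst_mem A 0, ?_⟩
      have : (fun x => (SimpleFunc.piecewise S hS (SimpleFunc.const X c)
          (SimpleFunc.const X 0)) x - (0:ℝ)) = fun _ => (0:ℝ) := by
        funext x
        simp [hc, SimpleFunc.piecewise_apply]
      rw [this, eLpNorm_zero']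
      exact zero_le
    · have hcn : (‖c‖₊ : ℝ≥0∞) ≠ 0 := by simpa using hc
      have hεc : ε / ‖c‖₊ ≠ 0 := by
        simp only [ne_eq, ENNReal.div_eq_zero_iff, not_or]
        exact ⟨hε, ENNReal.coe_ne_top⟩
      obtain ⟨g0, hg0A, hg0I, hg0⟩ :=
        myIndicator_approx m A hAc hAb hAsep P hP1 hPt hS hεc
      refine ⟨c • g0, A.smul_mem hg0A c, ?_⟩
      have heq : (fun x => (SimpleFunc.piecewise S hS (SimpleFunc.const X c)
          (SimpleFunc.const X 0)) x - (c • g0) x)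
          = c • (fun x => S.indicator (fun _ => (1:ℝ)) x - g0 x) := by
        funext x
        simp only [SimpleFunc.piecewise_apply, SimpleFunc.coe_const, Pi.smul_apply,
          smul_eq_mul, Set.indicator_apply]
        by_cases hx : x ∈ S <;> simp [hx] <;> ring
      rw [heq, eLpNorm_const_smul]
      calc (‖c‖₊ : ℝ≥0∞) • eLpNorm (fun x => S.indicator (fun _ => (1:ℝ)) x - g0 x) P m
          ≤ (‖c‖₊ : ℝ≥0∞) * (ε / ‖c‖₊) := by
            rw [smul_eq_mul]
            exact mul_le_mul' le_rfl hg0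
        _ ≤ ε := ENNReal.mul_div_le
  | add hdisj hf hf' =>
    rename_i f f'
    intro ε hε
    have hε2 : ε / 2 ≠ 0 := by
      simp only [ne_eq, ENNReal.div_eq_zero_iff, not_or]
      exact ⟨hε, by norm_num⟩
    obtain ⟨g1, hg1A, hg1⟩ := hf (ε/2) hε2
    obtain ⟨g2, hg2A, hg2⟩ := hf' (ε/2) hε2
    refine ⟨g1 + g2, A.add_mem hg1A hg2A, ?_⟩
    have heq : (fun x => (f + f') x - (g1 + g2) x)
        = (fun x => f x - g1 x) + (fun x => f' x - g2 x) := by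
      funext x
      simp only [SimpleFunc.coe_add, Pi.add_apply]
      ring
    rw [heq]
    refine (eLpNorm_add_le ?_ ?_ hP1).trans ?_
    · exact ((f.measurable.sub (hAc g1 hg1A).measurable)).aestronglyMeasurable
    · exact ((f'.measurable.sub (hAc g2 hg2A).measurable)).aestronglyMeasurable
    · calc eLpNorm (fun x => f x - g1 x) P m + eLpNorm (fun x => f' x - g2 x) P m
          ≤ ε/2 + ε/2 := add_le_add hg1 hg2
        _ = ε := ENNReal.add_halves ε

set_option maxHeartbeats 1000000 in
theorem stmt3 {X : Type*} [TopologicalSpace X] [T2Space X] [MeasurableSpace X] [BorelSpace X]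
    (m : Measure X) [IsFiniteMeasure m] [m.InnerRegular]
    (A : Subalgebra ℝ (X → ℝ))
    (hAc : ∀ f ∈ A, Continuous f)
    (hAb : ∀ f ∈ A, ∃ C : ℝ, ∀ x, |f x| ≤ C)
    (hAsep : ∀ x y : X, x ≠ y → ∃ f ∈ A, f x ≠ f y)
    (p : ℝ) (hp : 1 ≤ p)
    (I : Set ℝ) (hIc : IsClosed I) (hIconv : Convex ℝ I)
    (f : X → ℝ) (hfm : Measurable f) (hfI : ∀ x, f x ∈ I)
    (hfint : ∫⁻ x, ENNReal.ofReal (|f x| ^ p) ∂m ≠ ⊤) :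
    ∃ F : ℕ → X → ℝ, (∀ n, F n ∈ A) ∧ (∀ n x, F n x ∈ I) ∧
      Tendsto (fun n => ∫⁻ x, ENNReal.ofReal (|f x - F n x| ^ p) ∂m) atTop (𝓝 0) := by
  rcases isEmpty_or_nonempty X with hX | hX
  · refine ⟨fun _ _ => 0, fun n => myConst_mem A 0, fun n x => (IsEmpty.false x).elim, ?_⟩
    have hm0 : m = 0 := m.eq_zero_of_isEmpty
    simp only [hm0, lintegral_zero_measure]
    exact tendsto_const_nhds
  · obtain ⟨x₀⟩ := hX
    have hp0 : (0:ℝ) < p := lt_of_lt_of_le one_pos hp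
    set P : ℝ≥0∞ := ENNReal.ofReal p with hP
    have hP0 : P ≠ 0 := by
      simp only [hP, ne_eq, ENNReal.ofReal_eq_zero, not_le]
      exact hp0
    have hPt : P ≠ ⊤ := ENNReal.ofReal_ne_top
    have hP1 : 1 ≤ P := ENNReal.one_le_ofReal.2 hp
    have hPr : P.toReal = p := ENNReal.toReal_ofReal hp0.le
    have key : ∀ v : X → ℝ,
        ∫⁻ x, ENNReal.ofReal (|v x| ^ p) ∂m = eLpNorm v P m ^ p := by
      intro v
      rw [eLpNorm_eq_lintegral_rpow_enorm_toReal hP0 hPt, hPr, one_div,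
        ENNReal.rpow_inv_rpow (ne_of_gt hp0)]
      refine lintegral_congr fun x => ?_
      rw [Real.enorm_eq_ofReal_abs, ENNReal.ofReal_rpow_of_nonneg (abs_nonneg _) hp0.le]
    have hMem : MemLp f P m := by
      refine ⟨hfm.aestronglyMeasurable, ?_⟩
      rw [lt_top_iff_ne_top]
      intro htop
      have h1 := key f
      rw [htop, ENNReal.top_rpow_of_pos hp0] at h1
      exact hfint h1
    have main : ∀ ε : ℝ≥0∞, ε ≠ 0 →
        ∃ G ∈ A, (∀ x, G x ∈ I) ∧ eLpNorm (fun x => f x - G x) P m ≤ ε := by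
      intro ε hε
      have hε2 : ε/2 ≠ 0 := by
        simp only [ne_eq, ENNReal.div_eq_zero_iff, not_or]
        exact ⟨hε, by norm_num⟩
      have hε4 : ε/2/2 ≠ 0 := by
        simp only [ne_eq, ENNReal.div_eq_zero_iff, not_or]
        exact ⟨⟨hε, by norm_num⟩, by norm_num⟩
      obtain ⟨η, hη, hconst⟩ := mySmall_const m P hε4
      obtain ⟨s, hs, -⟩ := hMem.exists_simpleFunc_eLpNorm_sub_lt hPt hε2
      obtain ⟨g, hgA, hgclose⟩ :=
        mySimpleFunc_approx m A hAc hAb hAsep P hP1 hPt s (ε/2/2) hε4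
      obtain ⟨C, hC⟩ := hAb g hgA
      have hM : ∀ x, |g x| ≤ max C 0 := fun x => (hC x).trans (le_max_left _ _)
      obtain ⟨G, hGA, hGI, hGest⟩ :=
        myProj_approx A hIc hIconv (hfI x₀) hgA (le_max_right C 0) hM hη
      refine ⟨G, hGA, hGI, ?_⟩
      have h1 : eLpNorm (fun x => f x - G x) P m ≤
          eLpNorm ((fun x => |f x - g x|) + fun _ => η) P m := by
        refine eLpNorm_mono_real fun x => ?_
        simp only [Pi.add_apply, Real.norm_eq_abs]
        exact hGest x (f x) (hfI x)
      refine h1.trans ?_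
      have habs : AEStronglyMeasurable (fun x => |f x - g x|) m :=
        ((hfm.sub (hAc g hgA).measurable).abs).aestronglyMeasurable
      refine (eLpNorm_add_le habs aestronglyMeasurable_const hP1).trans ?_
      have h2 := eLpNorm_norm (fun x => f x - g x) (p := P) (μ := m)
      simp only [Real.norm_eq_abs] at h2
      rw [h2]
      have h3 : (fun x => f x - g x) = (fun x => f x - s x) + fun x => s x - g x := by
        funext x
        simp only [Pi.add_apply]
        ring
      rw [h3]
      have h4 : AEStronglyMeasurable (fun x => f x - s x) m :=
        (hfm.sub s.measurable).aestronglyMeasurable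
      have h5 : AEStronglyMeasurable (fun x => s x - g x) m :=
        (s.measurable.sub (hAc g hgA).measurable).aestronglyMeasurable
      refine le_trans (add_le_add_left (eLpNorm_add_le h4 h5 hP1) _) ?_
      have hs' : eLpNorm (fun x => f x - s x) P m ≤ ε/2 := by
        have heq : (fun x => f x - s x) = f - ⇑s := rfl
        rw [heq]
        exact hs.le
      have hconst' : eLpNorm (fun _ : X => η) P m ≤ ε/2/2 :=
        hconst _ (fun x => by simp [Real.norm_eq_abs, abs_of_pos hη])
      calc eLpNorm (fun x => f x - s x) P m + eLpNorm (fun x => s x - g x) P m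
            + eLpNorm (fun _ : X => η) P m
          ≤ ε/2 + ε/2/2 + ε/2/2 := add_le_add (add_le_add hs' hgclose) hconst'
        _ = ε := by rw [add_assoc, ENNReal.add_halves, ENNReal.add_halves]
    choose G hGA hGI hGe using fun n : ℕ =>
      main ((n : ℝ≥0∞)⁻¹) (ENNReal.inv_ne_zero.2 (ENNReal.natCast_ne_top n))
    refine ⟨G, hGA, hGI, ?_⟩
    have hbound : ∀ n, ∫⁻ x, ENNReal.ofReal (|f x - G n x| ^ p) ∂m ≤ ((n:ℝ≥0∞)⁻¹) ^ p := by
      intro n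
      rw [key (fun x => f x - G n x)]
      exact ENNReal.rpow_le_rpow (hGe n) hp0.le
    have hlim : Tendsto (fun n : ℕ => ((n:ℝ≥0∞)⁻¹) ^ p) atTop (𝓝 0) := by
      have h1 : Tendsto (fun n : ℕ => ((n:ℝ≥0∞))⁻¹) atTop (𝓝 0) :=
        ENNReal.tendsto_inv_nat_nhds_zero
      have h2 := (ENNReal.continuous_rpow_const (y := p)).continuousAt (x := (0:ℝ≥0∞))
      have h3 := h2.tendsto.comp h1
      rwa [ENNReal.zero_rpow_of_pos hp0] at h3
    exact tendsto_of_tendsto_of_tendsto_of_le_of_le tendsto_const_nhds hlim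
      (fun n => zero_le) hbound
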